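/- Suppose E, x*, δ, M, μ, L satisfy Assumption (A) with k = 1. Let x ∈ ℝ^d with r = ‖x − x*‖₂ < δ, let v₁ be a unit eigenvector of ∇²E(x) corresponding to its smallest eigenvalue, let β = 2/(L+μ), and set x⁺ = x − β·(I − 2·v₁·v₁ᵀ)·∇E(x). Then ‖x⁺ − x*‖₂ ≤ (1 − 2μ/(L+μ))·r + M·r²/(L+μ). -/

import Mathlib

open Matrix Finset Filter

noncomputable section

abbrev EVec (d : ℕ) := EuclideanSpace ℝ (Fin d)

/-- The operator (spectral) norm of a real matrix, i.e. the norm of the induced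
linear map between Euclidean spaces. -/
noncomputable def specNorm {m n : Type*} [Fintype m] [Fintype n] [DecidableEq n]
    (A : Matrix m n ℝ) : ℝ :=
  ‖LinearMap.toContinuousLinearMap (Matrix.toEuclideanLin A)‖

/-- Matrix-vector multiplication on Euclidean space. -/
noncomputable def mulVecE {d : ℕ} (A : Matrix (Fin d) (Fin d) ℝ) (x : EVec d) : EVec d :=
  Matrix.toEuclideanLin A x

/-- Outer product `v · wᵀ` of two vectors. -/
def outer {d : ℕ} (v w : EVec d) : Matrix (Fin d) (Fin d) ℝ :=
  Matrix.of fun i j => v i * w j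

/-- Assumption (A) with index `k` for the energy `E` with Hessian `hess`, saddle point
`xstar`, radius `δ`, Lipschitz constant `M` and eigenvalue bounds `0 < μ < L`:
`E` is twice continuously differentiable, `hess` is the (symmetric) Hessian of `E`,
`∇E(x*) = 0`, the Hessian is `M`-Lipschitz on `U(x*, δ)`, and for every
`x ∈ U(x*, δ)` the eigenvalues `λ₁ ≤ … ≤ λ_d` of `∇²E(x)` satisfy
`λ₁ ≤ … ≤ λ_k < 0 < λ_{k+1} ≤ … ≤ λ_d` and `μ ≤ |λᵢ| ≤ L`. -/
def AssumptionA {d : ℕ} (k : ℕ) (E : EVec d → ℝ)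
    (hess : EVec d → Matrix (Fin d) (Fin d) ℝ)
    (xstar : EVec d) (δ M μ L : ℝ) : Prop :=
  ContDiff ℝ 2 E ∧
  (∀ y, HasFDerivAt (gradient E)
    (LinearMap.toContinuousLinearMap (Matrix.toEuclideanLin (hess y))) y) ∧
  (∀ y, (hess y).IsSymm) ∧
  gradient E xstar = 0 ∧
  0 < δ ∧ 0 < M ∧ 0 < μ ∧ μ < L ∧
  (∀ x y : EVec d, ‖x - xstar‖ < δ → ‖y - xstar‖ < δ →
    specNorm (hess x - hess y) ≤ M * ‖x - y‖) ∧
  (∀ x : EVec d, ‖x - xstar‖ < δ →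
    ∃ (u : Fin d → EVec d) (lam : Fin d → ℝ),
      (∀ i j, (inner ℝ (u i) (u j) : ℝ) = if i = j then 1 else 0) ∧
      (∀ i, mulVecE (hess x) (u i) = lam i • u i) ∧
      Monotone lam ∧
      (∀ i : Fin d, (i : ℕ) < k → lam i < 0) ∧
      (∀ i : Fin d, k ≤ (i : ℕ) → 0 < lam i) ∧
      (∀ i, μ ≤ |lam i| ∧ |lam i| ≤ L))

lemma mulVecE_apply {d : ℕ} (A : Matrix (Fin d) (Fin d) ℝ) (x : EVec d) (i : Fin d) :
    mulVecE A x i = ∑ j, A i j * x j := by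
  rfl

lemma mulVecE_sub_mat {d : ℕ} (A B : Matrix (Fin d) (Fin d) ℝ) (x : EVec d) :
    mulVecE (A - B) x = mulVecE A x - mulVecE B x := by
  simp [mulVecE, map_sub]

lemma mulVecE_one {d : ℕ} (x : EVec d) : mulVecE 1 x = x := by
  ext i; simp [mulVecE_apply, Matrix.one_apply]

lemma mulVecE_smul_mat {d : ℕ} (c : ℝ) (A : Matrix (Fin d) (Fin d) ℝ) (x : EVec d) :
    mulVecE (c • A) x = c • mulVecE A x := by
  simp [mulVecE, _root_.map_smul]

lemma mulVecE_outer {d : ℕ} (v w x : EVec d) :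
    mulVecE (outer v w) x = (inner ℝ w x : ℝ) • v := by
  ext i
  simp [mulVecE_apply, outer, PiLp.inner_apply, RCLike.inner_apply, mul_comm, mul_assoc,
    Finset.mul_sum, PiLp.smul_apply, smul_eq_mul]

lemma norm_mulVecE_le {d : ℕ} (A : Matrix (Fin d) (Fin d) ℝ) (x : EVec d) :
    ‖mulVecE A x‖ ≤ specNorm A * ‖x‖ := by
  exact (LinearMap.toContinuousLinearMap (Matrix.toEuclideanLin A)).le_opNorm x

lemma refl_apply {d : ℕ} (v w : EVec d) :
    mulVecE (1 - (2:ℝ) • outer v v) w = w - ((2:ℝ) * (inner ℝ v w : ℝ)) • v := by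
  rw [mulVecE_sub_mat, mulVecE_one, mulVecE_smul_mat, mulVecE_outer, smul_smul]

lemma norm_refl {d : ℕ} (v w : EVec d) (hv : ‖v‖ = 1) :
    ‖w - ((2:ℝ) * (inner ℝ v w : ℝ)) • v‖ = ‖w‖ := by
  have h := @norm_sub_sq_real (EVec d) _ _ w (((2:ℝ) * (inner ℝ v w : ℝ)) • v)
  have h2 : ‖w - ((2:ℝ) * (inner ℝ v w : ℝ)) • v‖ ^ 2 = ‖w‖ ^ 2 := by
    rw [h]
    rw [real_inner_smul_right, norm_smul]
    rw [real_inner_comm v w] at *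
    simp [hv, mul_pow]
    ring
  nlinarith [norm_nonneg (w - ((2:ℝ) * (inner ℝ v w : ℝ)) • v), norm_nonneg w]

lemma mulVecE_symm {d : ℕ} {A : Matrix (Fin d) (Fin d) ℝ} (hA : A.IsSymm)
    (w z : EVec d) : (inner ℝ (mulVecE A w) z : ℝ) = inner ℝ w (mulVecE A z) := by
  simp only [PiLp.inner_apply, RCLike.inner_apply, starRingEnd_apply, star_trivial,
    mulVecE_apply]
  simp only [Finset.sum_mul, Finset.mul_sum]
  rw [Finset.sum_comm]
  refine Finset.sum_congr rfl fun i _ => Finset.sum_congr rfl fun j _ => ?_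
  rw [← hA.apply i j]
  ring

lemma key_spectral {d : ℕ} (hd : 0 < d) (A : Matrix (Fin d) (Fin d) ℝ) (hA : A.IsSymm)
    (u : Fin d → EVec d) (lam : Fin d → ℝ)
    (horth : ∀ i j, (inner ℝ (u i) (u j) : ℝ) = if i = j then 1 else 0)
    (heigu : ∀ i, mulVecE A (u i) = lam i • u i)
    (hneg : lam ⟨0, hd⟩ < 0) (hpos : ∀ i : Fin d, i ≠ ⟨0, hd⟩ → 0 < lam i)
    {μ L : ℝ} (hμ : 0 < μ) (hμL : μ < L)
    (hbd : ∀ i, μ ≤ |lam i| ∧ |lam i| ≤ L)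
    (v₁ : EVec d) (hv₁ : ‖v₁‖ = 1) (lam₁ : ℝ)
    (heig : mulVecE A v₁ = lam₁ • v₁)
    (hmin : ∀ (t : ℝ) (w : EVec d), w ≠ 0 → mulVecE A w = t • w → lam₁ ≤ t)
    (β : ℝ) (hβ : β = 2 / (L + μ)) (e : EVec d) :
    ‖e - β • (mulVecE A e - (2 * (inner ℝ v₁ (mulVecE A e) : ℝ)) • v₁)‖ ≤
      (L - μ) / (L + μ) * ‖e‖ := by
  have hs : (0:ℝ) < L + μ := by linarith
  set i0 : Fin d := ⟨0, hd⟩ with hi0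
  set C : ℝ := (L - μ) / (L + μ) with hC
  have hC0 : 0 ≤ C := by rw [hC]; apply div_nonneg <;> linarith
  have hCs : C * (L + μ) = L - μ := by rw [hC]; field_simp
  have horth' : Orthonormal ℝ u := by
    rw [orthonormal_iff_ite]; intro i j; rw [horth i j]
  haveI : Nonempty (Fin d) := ⟨i0⟩
  have hcard : Fintype.card (Fin d) = Module.finrank ℝ (EVec d) := by
    simp [finrank_euclideanSpace_fin]
  obtain ⟨b, hb⟩ : ∃ b : OrthonormalBasis (Fin d) ℝ (EVec d), ⇑b = u := by
    refine ⟨(basisOfOrthonormalOfCardEqFinrank horth' hcard).toOrthonormalBasis ?_, ?_⟩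
    · rw [coe_basisOfOrthonormalOfCardEqFinrank]; exact horth'
    · rw [Module.Basis.coe_toOrthonormalBasis, coe_basisOfOrthonormalOfCardEqFinrank]
  -- eigenvector structure
  set c : Fin d → ℝ := fun i => (inner ℝ (u i) v₁ : ℝ) with hc
  have hv₁sum : ∑ i, c i • u i = v₁ := by
    have h := b.sum_repr' v₁
    rw [hb] at h
    exact h
  have hu0 : u i0 ≠ 0 := by
    intro h
    have h2 := horth i0 i0
    rw [h] at h2
    simp at h2
  have hlam1le : lam₁ ≤ lam i0 := hmin (lam i0) (u i0) hu0 (heigu i0)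
  have hczero : ∀ i, i ≠ i0 → c i = 0 := by
    intro i hi
    have h1 : lam i * c i = lam₁ * c i := by
      calc lam i * c i = (inner ℝ (lam i • u i) v₁ : ℝ) := by
            rw [real_inner_smul_left]
        _ = (inner ℝ (mulVecE A (u i)) v₁ : ℝ) := by rw [heigu i]
        _ = (inner ℝ (u i) (mulVecE A v₁) : ℝ) := mulVecE_symm hA _ _
        _ = (inner ℝ (u i) (lam₁ • v₁) : ℝ) := by rw [heig]
        _ = lam₁ * c i := by rw [real_inner_smul_right]
    have h2 : lam i ≠ lam₁ := by
      have := hpos i hi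
      linarith
    have h3 : (lam i - lam₁) * c i = 0 := by ring_nf; linarith [h1]
    rcases mul_eq_zero.1 h3 with h | h
    · exact absurd (by linarith : lam i = lam₁) h2
    · exact h
  have hv₁eq : v₁ = c i0 • u i0 := by
    rw [← hv₁sum]
    rw [Finset.sum_eq_single i0 (fun i _ hi => by rw [hczero i hi, zero_smul])
      (fun h => absurd (Finset.mem_univ i0) h)]
  have hc0sq : c i0 * c i0 = 1 := by
    have h1 : (inner ℝ v₁ v₁ : ℝ) = 1 := by
      rw [real_inner_self_eq_norm_sq, hv₁]; norm_num
    rw [hv₁eq, real_inner_smul_left, real_inner_smul_right, horth i0 i0] at h1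
    simpa using h1
  -- decompose e
  set a : Fin d → ℝ := fun i => (inner ℝ (u i) e : ℝ) with ha
  have he : e = ∑ i, a i • u i := by
    have h := b.sum_repr' e
    rw [hb] at h
    exact h.symm
  have hAe : mulVecE A e = ∑ i, (a i * lam i) • u i := by
    rw [he]
    show Matrix.toEuclideanLin A _ = _
    rw [map_sum]
    refine Finset.sum_congr rfl fun i _ => ?_
    rw [_root_.map_smul]
    show a i • mulVecE A (u i) = _
    rw [heigu i, smul_smul]
  have hinner : (inner ℝ v₁ (mulVecE A e) : ℝ) = c i0 * (a i0 * lam i0) := by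
    rw [hv₁eq, hAe, real_inner_smul_left, inner_sum]
    simp only [real_inner_smul_right, horth, mul_ite, mul_one, mul_zero]
    rw [Finset.sum_ite_eq Finset.univ i0 (fun i => a i * lam i)]
    simp
  set g : Fin d → ℝ := fun i => a i * (if i = i0 then 1 + β * lam i else 1 - β * lam i)
    with hg
  have hT : e - β • (mulVecE A e - (2 * (inner ℝ v₁ (mulVecE A e) : ℝ)) • v₁)
      = ∑ i, g i • u i := by
    rw [hinner, hAe, hv₁eq]
    nth_rewrite 1 [he]
    rw [smul_smul]
    have h2 : 2 * (c i0 * (a i0 * lam i0)) * c i0 = 2 * (a i0 * lam i0) := by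
      have h : 2 * (c i0 * (a i0 * lam i0)) * c i0
          = 2 * (a i0 * lam i0) * (c i0 * c i0) := by ring
      rw [h, hc0sq, mul_one]
    rw [h2]
    have h3 : ∑ i, (if i = i0 then 2 * (a i0 * lam i0) else (0:ℝ)) • u i
        = (2 * (a i0 * lam i0)) • u i0 := by
      simp [ite_smul]
    rw [← h3, ← Finset.sum_sub_distrib, Finset.smul_sum, ← Finset.sum_sub_distrib]
    refine Finset.sum_congr rfl fun i _ => ?_
    by_cases h : i = i0
    · simp only [hg, if_pos h, smul_sub, smul_smul, h, if_true]
      module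
    · simp only [hg, if_neg h, smul_sub, smul_smul, zero_smul, smul_zero, sub_zero]
      module
  -- coefficient bounds
  have hcoef : ∀ i, g i ^ 2 ≤ C ^ 2 * a i ^ 2 := by
    intro i
    have hbi := hbd i
    by_cases h : i = i0
    · have hlneg : lam i < 0 := by rw [h]; exact hneg
      have habs : |lam i| = -lam i := abs_of_neg hlneg
      rw [habs] at hbi
      have hb1 : (1 + β * lam i) * (L + μ) = L + μ + 2 * lam i := by
        rw [hβ]; field_simp
      have hfac : (1 + β * lam i) ^ 2 ≤ C ^ 2 := by
        apply sq_le_sq'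
        · apply le_of_mul_le_mul_right _ hs
          rw [neg_mul, hCs, hb1]; linarith [hbi.1, hbi.2]
        · apply le_of_mul_le_mul_right _ hs
          rw [hCs, hb1]; linarith [hbi.1, hbi.2]
      have hmul := mul_le_mul_of_nonneg_left hfac (sq_nonneg (a i))
      have hgi : g i = a i * (1 + β * lam i) := by rw [hg]; simp only [if_pos h]
      calc g i ^ 2 = a i ^ 2 * (1 + β * lam i) ^ 2 := by rw [hgi]; ring
        _ ≤ a i ^ 2 * C ^ 2 := hmul
        _ = C ^ 2 * a i ^ 2 := by ring
    · have hlpos : 0 < lam i := hpos i h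
      have habs : |lam i| = lam i := abs_of_pos hlpos
      rw [habs] at hbi
      have hb1 : (1 - β * lam i) * (L + μ) = L + μ - 2 * lam i := by
        rw [hβ]; field_simp
      have hfac : (1 - β * lam i) ^ 2 ≤ C ^ 2 := by
        apply sq_le_sq'
        · apply le_of_mul_le_mul_right _ hs
          rw [neg_mul, hCs, hb1]; linarith [hbi.1, hbi.2]
        · apply le_of_mul_le_mul_right _ hs
          rw [hCs, hb1]; linarith [hbi.1, hbi.2]
      have hmul := mul_le_mul_of_nonneg_left hfac (sq_nonneg (a i))
      have hgi : g i = a i * (1 - β * lam i) := by rw [hg]; simp only [if_neg h]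
      calc g i ^ 2 = a i ^ 2 * (1 - β * lam i) ^ 2 := by rw [hgi]; ring
        _ ≤ a i ^ 2 * C ^ 2 := hmul
        _ = C ^ 2 * a i ^ 2 := by ring
  -- norms
  have hnormT : ‖∑ i, g i • u i‖ ^ 2 = ∑ i, g i ^ 2 := by
    rw [← real_inner_self_eq_norm_sq]
    rw [horth'.inner_sum g g Finset.univ]
    simp [sq]
  have hnorme : ‖e‖ ^ 2 = ∑ i, a i ^ 2 := by
    rw [← real_inner_self_eq_norm_sq]
    nth_rewrite 1 [he]; nth_rewrite 1 [he]
    rw [horth'.inner_sum a a Finset.univ]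
    simp [sq]
  have hsq : ‖∑ i, g i • u i‖ ^ 2 ≤ (C * ‖e‖) ^ 2 := by
    rw [hnormT]
    calc ∑ i, g i ^ 2 ≤ ∑ i, C ^ 2 * a i ^ 2 := Finset.sum_le_sum fun i _ => hcoef i
      _ = C ^ 2 * ∑ i, a i ^ 2 := by rw [Finset.mul_sum]
      _ = (C * ‖e‖) ^ 2 := by rw [← hnorme]; ring
  rw [hT]
  have h1 : 0 ≤ C * ‖e‖ := mul_nonneg hC0 (norm_nonneg e)
  nlinarith [norm_nonneg (∑ i, g i • u i)]

lemma remainder_bound {d : ℕ} (E : EVec d → ℝ)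
    (hess : EVec d → Matrix (Fin d) (Fin d) ℝ)
    (xstar : EVec d) {δ M : ℝ}
    (hgrad : ∀ y, HasFDerivAt (gradient E)
      (LinearMap.toContinuousLinearMap (Matrix.toEuclideanLin (hess y))) y)
    (hgs : gradient E xstar = 0)
    (hlip : ∀ x y : EVec d, ‖x - xstar‖ < δ → ‖y - xstar‖ < δ →
      specNorm (hess x - hess y) ≤ M * ‖x - y‖)
    (hM : 0 ≤ M)
    (x : EVec d) (hx : ‖x - xstar‖ < δ) :
    ‖gradient E x - mulVecE (hess x) (x - xstar)‖ ≤ M * ‖x - xstar‖ ^ 2 / 2 := by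
  set e : EVec d := x - xstar with he
  set r : ℝ := ‖e‖ with hr
  have hr0 : 0 ≤ r := norm_nonneg e
  set φ : ℝ → EVec d := fun t => gradient E (xstar + t • e) - t • mulVecE (hess x) e with hφ
  set φ' : ℝ → EVec d := fun t =>
    mulVecE (hess (xstar + t • e)) e - mulVecE (hess x) e with hφ'
  have hd : ∀ t : ℝ, HasDerivAt φ (φ' t) t := by
    intro t
    have h1 : HasDerivAt (fun t : ℝ => xstar + t • e) e t := by
      simpa using ((hasDerivAt_id t).smul_const e).const_add xstar
    have h2 : HasDerivAt (fun t : ℝ => gradient E (xstar + t • e))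
        (mulVecE (hess (xstar + t • e)) e) t := by
      have := (hgrad (xstar + t • e)).comp_hasDerivAt t h1
      exact this
    have h3 : HasDerivAt (fun t : ℝ => t • mulVecE (hess x) e)
        (mulVecE (hess x) e) t := by
      simpa using (hasDerivAt_id t).smul_const (mulVecE (hess x) e)
    exact h2.sub h3
  set B : ℝ → ℝ := fun t => M * r ^ 2 * (t - t ^ 2 / 2) with hB
  set B' : ℝ → ℝ := fun t => M * r ^ 2 * (1 - t) with hB'
  have hdB : ∀ t : ℝ, HasDerivAt B (B' t) t := by
    intro t
    have h1 : HasDerivAt (fun t : ℝ => t - t ^ 2 / 2) (1 - t) t := by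
      have := ((hasDerivAt_id t).sub ((hasDerivAt_pow 2 t).div_const 2))
      simpa [Pi.sub_def] using this
    simpa [hB, hB', mul_comm] using h1.const_mul (M * r ^ 2)
  have hbound : ∀ t ∈ Set.Ico (0:ℝ) 1, ‖φ' t‖ ≤ B' t := by
    intro t ht
    have hmem : ‖(xstar + t • e) - xstar‖ < δ := by
      have : ‖(xstar + t • e) - xstar‖ = |t| * r := by
        rw [add_sub_cancel_left, norm_smul, Real.norm_eq_abs]
      rw [this, abs_of_nonneg ht.1]
      calc t * r ≤ 1 * r := by
            apply mul_le_mul_of_nonneg_right (le_of_lt ht.2) hr0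
        _ = r := one_mul r
        _ < δ := hx
    have hdist : ‖(xstar + t • e) - x‖ = (1 - t) * r := by
      have h : (xstar + t • e) - x = (t - 1) • e := by
        rw [he]
        module
      rw [h, norm_smul, Real.norm_eq_abs, abs_of_nonpos (by linarith [ht.2])]
      rw [← hr]; ring
    calc ‖φ' t‖ = ‖mulVecE (hess (xstar + t • e) - hess x) e‖ := by
          rw [hφ', mulVecE_sub_mat]
      _ ≤ specNorm (hess (xstar + t • e) - hess x) * r := norm_mulVecE_le _ _
      _ ≤ (M * ‖(xstar + t • e) - x‖) * r := by
          apply mul_le_mul_of_nonneg_right _ hr0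
          exact hlip _ _ hmem hx
      _ = B' t := by rw [hdist, hB']; ring
  have hφ0 : φ 0 = 0 := by
    simp [hφ, hgs]
  have key := image_norm_le_of_norm_deriv_right_le_deriv_boundary
    (f := φ) (f' := φ') (a := 0) (b := 1)
    (fun t _ => (hd t).continuousAt.continuousWithinAt)
    (fun t ht => (hd t).hasDerivWithinAt)
    (by rw [hφ0]; simp [hB]) hdB hbound
  have h1 : ‖φ 1‖ ≤ B 1 := key (Set.right_mem_Icc.2 zero_le_one)
  have hφ1 : φ 1 = gradient E x - mulVecE (hess x) e := by
    rw [hφ]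
    simp [he]
  rw [hφ1] at h1
  have hB1 : B 1 = M * r ^ 2 / 2 := by rw [hB]; ring
  rw [hB1] at h1
  exact h1

/-- Theorem 4.1 (single-step estimate, exact eigenvector, index 1): under Assumption (A)
with `k = 1`, if `r = ‖x - x*‖₂ < δ`, `v₁` is a unit eigenvector of `∇²E(x)` for its
smallest eigenvalue, `β = 2/(L+μ)` and `x⁺ = x - β (I - 2 v₁ v₁ᵀ) ∇E(x)`, then
`‖x⁺ - x*‖₂ ≤ (1 - 2μ/(L+μ)) r + M r² / (L+μ)`. -/
theorem index1_exact_single_step {d : ℕ} (E : EVec d → ℝ)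
    (hess : EVec d → Matrix (Fin d) (Fin d) ℝ)
    (xstar : EVec d) (δ M μ L : ℝ)
    (hA : AssumptionA 1 E hess xstar δ M μ L)
    (x : EVec d) (hx : ‖x - xstar‖ < δ)
    (v₁ : EVec d) (hv₁ : ‖v₁‖ = 1) (lam₁ : ℝ)
    (heig : mulVecE (hess x) v₁ = lam₁ • v₁)
    (hmin : ∀ (t : ℝ) (w : EVec d), w ≠ 0 → mulVecE (hess x) w = t • w → lam₁ ≤ t)
    (β : ℝ) (hβ : β = 2 / (L + μ))
    (xplus : EVec d)
    (hstep : xplus = x - β • mulVecE (1 - (2 : ℝ) • outer v₁ v₁) (gradient E x)) :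
    ‖xplus - xstar‖ ≤
      (1 - 2 * μ / (L + μ)) * ‖x - xstar‖ + M * ‖x - xstar‖ ^ 2 / (L + μ) := by
  obtain ⟨hE2, hgrad, hsym, hgs, hδ, hM, hμ, hμL, hlip, heigdata⟩ := hA
  have hd : 0 < d := by
    by_contra h
    push_neg at h
    have hd0 : d = 0 := by omega
    subst hd0
    have hz : v₁ = 0 := by ext i; exact i.elim0
    rw [hz] at hv₁
    simp at hv₁
  obtain ⟨u, lam, horth, heigu, hmono, hneg1, hpos1, hbd⟩ := heigdata x hx
  have hs : (0:ℝ) < L + μ := by linarith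
  have hneg : lam ⟨0, hd⟩ < 0 := hneg1 ⟨0, hd⟩ (by simp)
  have hpos : ∀ i : Fin d, i ≠ ⟨0, hd⟩ → 0 < lam i := by
    intro i hi
    apply hpos1 i
    have : (i : ℕ) ≠ 0 := by
      intro hiv
      exact hi (Fin.ext hiv)
    omega
  set e : EVec d := x - xstar with he
  set R : EVec d := gradient E x - mulVecE (hess x) e with hRdef
  have hR : ‖R‖ ≤ M * ‖e‖ ^ 2 / 2 :=
    remainder_bound E hess xstar hgrad hgs hlip (le_of_lt hM) x hx
  have hkey := key_spectral hd (hess x) (hsym x) u lam horth heigu hneg hpos hμ hμL hbd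
    v₁ hv₁ lam₁ heig hmin β hβ e
  have hgdecomp : gradient E x = mulVecE (hess x) e + R := by
    rw [hRdef]; abel
  have hsplit : mulVecE (1 - (2:ℝ) • outer v₁ v₁) (gradient E x)
      = mulVecE (1 - (2:ℝ) • outer v₁ v₁) (mulVecE (hess x) e)
        + mulVecE (1 - (2:ℝ) • outer v₁ v₁) R := by
    rw [hgdecomp]
    exact map_add (Matrix.toEuclideanLin (1 - (2:ℝ) • outer v₁ v₁)) _ _
  have hxp : xplus - xstar =
      (e - β • (mulVecE (hess x) e - (2 * (inner ℝ v₁ (mulVecE (hess x) e) : ℝ)) • v₁))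
        - β • (R - (2 * (inner ℝ v₁ R : ℝ)) • v₁) := by
    rw [hstep, hsplit, refl_apply, refl_apply, he]
    module
  have hβ0 : 0 ≤ β := by rw [hβ]; positivity
  have hnormR : ‖R - (2 * (inner ℝ v₁ R : ℝ)) • v₁‖ = ‖R‖ := norm_refl v₁ R hv₁
  calc ‖xplus - xstar‖
      ≤ ‖e - β • (mulVecE (hess x) e - (2 * (inner ℝ v₁ (mulVecE (hess x) e) : ℝ)) • v₁)‖
        + ‖β • (R - (2 * (inner ℝ v₁ R : ℝ)) • v₁)‖ := by
        rw [hxp]; exact norm_sub_le _ _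
    _ ≤ (L - μ) / (L + μ) * ‖e‖ + β * ‖R‖ := by
        apply add_le_add hkey
        rw [norm_smul, Real.norm_eq_abs, abs_of_nonneg hβ0, hnormR]
    _ ≤ (L - μ) / (L + μ) * ‖e‖ + β * (M * ‖e‖ ^ 2 / 2) := by
        apply add_le_add le_rfl
        exact mul_le_mul_of_nonneg_left hR hβ0
    _ = (1 - 2 * μ / (L + μ)) * ‖e‖ + M * ‖e‖ ^ 2 / (L + μ) := by
        rw [hβ]
        field_simp
        ring
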